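/- Let U ⊆ ℝ^n be open and V : U → ℝ be Lipschitz continuous. Let I ⊆ ℝ be an interval, t an interior point of I (or its left endpoint), and x : I → ℝ^n a function that is differentiable at t from the right with right derivative x'(t), and such that x(t) ∈ U. Then limsup_{h→0⁺} (V(x(t+h)) − V(x(t)))/h ≤ limsup_{h→0⁺} (V(x(t) + h·x'(t)) − V(x(t)))/h. -/

import Mathlib

open Filter Topology Set
open scoped BigOperators

/-- for Lipschitz `V` and a curve `x` that is right-differentiable at `t`
with right derivative `x'`, the Dini derivative of `V ∘ x` at `t` is bounded by the
Dini derivative of `V` at `x(t)` in the direction `x'`. -/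
theorem stmt5 (n : ℕ)
    (U : Set (EuclideanSpace ℝ (Fin n))) (hU : IsOpen U)
    (V : EuclideanSpace ℝ (Fin n) → ℝ)
    -- V is Lipschitz continuous on U
    (hV : ∃ L : ℝ, 0 ≤ L ∧ ∀ y ∈ U, ∀ y' ∈ U, |V y - V y'| ≤ L * ‖y - y'‖)
    -- I is an interval, t ∈ I is an interior point or the left endpoint of I
    (I : Set ℝ) (hI : I.OrdConnected) (t : ℝ) (ht : t ∈ I)
    (hright : ∃ s ∈ I, t < s)
    (x : ℝ → EuclideanSpace ℝ (Fin n)) (x' : EuclideanSpace ℝ (Fin n))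
    -- x is differentiable at t from the right with right derivative x'
    (hx : HasDerivWithinAt x x' (I ∩ Set.Ici t) t)
    (hxt : x t ∈ U) :
    Filter.limsup (fun h : ℝ => (((V (x (t + h)) - V (x t)) / h : ℝ) : EReal)) (𝓝[>] (0 : ℝ))
      ≤ Filter.limsup (fun h : ℝ => (((V (x t + h • x') - V (x t)) / h : ℝ) : EReal))
          (𝓝[>] (0 : ℝ)) := by
  obtain ⟨L, hL0, hLip⟩ := hV
  obtain ⟨s, hsI, hts⟩ := hright
  set g : ℝ → ℝ := fun h => (V (x t + h • x') - V (x t)) / h with hg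
  set e : ℝ → ℝ := fun h => (V (x (t + h)) - V (x t + h • x')) / h with he
  -- the map h ↦ t + h tends to t within I ∩ Ici t
  have hmem : ∀ᶠ h in 𝓝[>] (0 : ℝ), t + h ∈ I ∩ Set.Ici t := by
    filter_upwards [Ioo_mem_nhdsGT_of_mem (Set.left_mem_Ico.2 (by linarith : (0:ℝ) < s - t))]
      with h hh
    obtain ⟨h1, h2⟩ := hh
    exact ⟨hI.out ht hsI (Set.mem_Icc.2 ⟨by linarith, by linarith⟩), Set.mem_Ici.2 (by linarith)⟩
  have htend : Tendsto (fun h : ℝ => t + h) (𝓝[>] (0 : ℝ)) (𝓝[I ∩ Set.Ici t] t) := by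
    rw [tendsto_nhdsWithin_iff]
    constructor
    · have : Tendsto (fun h : ℝ => t + h) (𝓝 (0 : ℝ)) (𝓝 (t + 0)) :=
        (continuous_const.add continuous_id).tendsto 0
      simpa using this.mono_left nhdsWithin_le_nhds
    · exact hmem
  -- little-o estimate
  have hlo : (fun h : ℝ => x (t + h) - x t - h • x') =o[𝓝[>] (0 : ℝ)] (fun h : ℝ => h) := by
    have := hx.isLittleO.comp_tendsto htend
    simp only [Function.comp_def, add_sub_cancel_left] at this
    exact this
  have hnorm : Tendsto (fun h : ℝ => ‖x (t + h) - x t - h • x'‖ / h) (𝓝[>] (0 : ℝ)) (𝓝 0) := by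
    have := (hlo.norm_norm).tendsto_div_nhds_zero
    refine this.congr' ?_
    filter_upwards [self_mem_nhdsWithin] with h (hh : 0 < h)
    rw [Real.norm_of_nonneg hh.le]
  -- membership in U for small h
  have hUmem : ∀ᶠ h in 𝓝[>] (0 : ℝ), x (t + h) ∈ U ∧ x t + h • x' ∈ U := by
    have hcont : ContinuousWithinAt x (I ∩ Set.Ici t) t := hx.continuousWithinAt
    have h1 : ∀ᶠ h in 𝓝[>] (0 : ℝ), x (t + h) ∈ U := by
      exact htend.eventually (hcont (hU.mem_nhds hxt))
    have h2 : ∀ᶠ h in 𝓝[>] (0 : ℝ), x t + h • x' ∈ U := by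
      have hc : Tendsto (fun h : ℝ => x t + h • x') (𝓝 (0 : ℝ)) (𝓝 (x t)) := by
        have : Tendsto (fun h : ℝ => x t + h • x') (𝓝 (0 : ℝ)) (𝓝 (x t + (0:ℝ) • x')) :=
          (continuous_const.add (continuous_id.smul continuous_const)).tendsto 0
        simpa using this
      exact (hc.mono_left nhdsWithin_le_nhds).eventually (hU.eventually_mem hxt)
    exact h1.and h2
  -- e tends to 0
  have hb : Tendsto (fun h : ℝ => L * (‖x (t + h) - x t - h • x'‖ / h)) (𝓝[>] (0 : ℝ)) (𝓝 0) := by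
    simpa using hnorm.const_mul L
  have hezero : Tendsto e (𝓝[>] (0 : ℝ)) (𝓝 0) := by
    refine squeeze_zero_norm' ?_ hb
    filter_upwards [hUmem, self_mem_nhdsWithin] with h hmU (hh : 0 < h)
    have hle := hLip _ hmU.1 _ hmU.2
    have heq : x (t + h) - (x t + h • x') = x (t + h) - x t - h • x' := by abel
    rw [heq] at hle
    have habs : |e h| = |V (x (t + h)) - V (x t + h • x')| / h := by
      rw [he]; simp [abs_div, abs_of_pos hh]
    rw [Real.norm_eq_abs, habs]
    calc |V (x (t + h)) - V (x t + h • x')| / h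
        ≤ L * ‖x (t + h) - x t - h • x'‖ / h := div_le_div_of_nonneg_right hle hh.le
      _ = L * (‖x (t + h) - x t - h • x'‖ / h) := by ring
  have hecoe : Tendsto (fun h => ((e h : ℝ) : EReal)) (𝓝[>] (0 : ℝ)) (𝓝 (0 : EReal)) := by
    have : Tendsto (fun h => ((e h : ℝ) : EReal)) (𝓝[>] (0 : ℝ)) (𝓝 (((0:ℝ) : EReal))) :=
      (continuous_coe_real_ereal.tendsto 0).comp hezero
    simpa using this
  have helimsup : Filter.limsup (fun h => ((e h : ℝ) : EReal)) (𝓝[>] (0 : ℝ)) = 0 :=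
    hecoe.limsup_eq
  -- decomposition
  have hdecomp : (fun h : ℝ => (((V (x (t + h)) - V (x t)) / h : ℝ) : EReal))
      = (fun h : ℝ => ((g h : ℝ) : EReal)) + fun h => ((e h : ℝ) : EReal) := by
    funext h
    have : (V (x (t + h)) - V (x t)) / h = g h + e h := by
      rw [hg, he, ← add_div]; ring_nf
    rw [this]
    simp [EReal.coe_add]
  rw [hdecomp]
  have hle := EReal.limsup_add_le (u := fun h : ℝ => ((g h : ℝ) : EReal))
    (v := fun h => ((e h : ℝ) : EReal)) (f := 𝓝[>] (0:ℝ))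
    (Or.inr (by rw [helimsup]; exact EReal.zero_ne_top))
    (Or.inr (by rw [helimsup]; exact EReal.zero_ne_bot))
  rw [helimsup, add_zero] at hle
  exact hle
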